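/- Let M be a stable n×n real matrix partitioned with index sets U and W, let Σ be positive definite with blocks S∘S = Σ_{WW}, and define D = M_{UU}ᵀ − M_{WU}ᵀ (S∘S)⁻¹ Σ_{WU} and E = M_{WU}ᵀ (S∘S)⁻¹ M_{WU}. Then the pair (D,E) is stabilizable: there exists a matrix K such that D + EK is stable. -/

import Mathlib

open Matrix Filter
open scoped ComplexOrder Topology ENNReal NNReal

def IsStableMatrix {n : Type} [Fintype n] [DecidableEq n]
    (M : Matrix n n ℝ) : Prop :=
  ∀ z ∈ spectrum ℂ (M.map (algebraMap ℝ ℂ)), z.re < 0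

namespace Stmt17
set_option linter.unusedSectionVars false
set_option maxHeartbeats 1000000

variable {n : Type} [Fintype n] [DecidableEq n]

/-- real part of complex quadratic form of a real matrix. -/
lemma re_quad (R : Matrix n n ℝ) (v : n → ℂ) :
    (star v ⬝ᵥ ((R.map (algebraMap ℝ ℂ)) *ᵥ v)).re
      = (fun i => (v i).re) ⬝ᵥ (R *ᵥ fun i => (v i).re)
        + (fun i => (v i).im) ⬝ᵥ (R *ᵥ fun i => (v i).im) := by
  simp only [dotProduct, mulVec, Pi.star_apply, Matrix.map_apply]
  rw [Complex.re_sum]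
  rw [← Finset.sum_add_distrib]
  refine Finset.sum_congr rfl fun i _ => ?_
  rw [Finset.mul_sum, Complex.re_sum, Finset.mul_sum, Finset.mul_sum, ← Finset.sum_add_distrib]
  refine Finset.sum_congr rfl fun j _ => ?_
  simp only [Complex.coe_algebraMap, Complex.mul_re, Complex.mul_im, RCLike.star_def, Complex.conj_re,
    Complex.conj_im, Complex.ofReal_re, Complex.ofReal_im]
  ring

lemma re_quad_nonneg {R : Matrix n n ℝ} (hR : R.PosSemidef) (v : n → ℂ) :
    0 ≤ (star v ⬝ᵥ ((R.map (algebraMap ℝ ℂ)) *ᵥ v)).re := by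
  rw [re_quad]
  have h1 := hR.dotProduct_mulVec_nonneg (fun i => (v i).re)
  have h2 := hR.dotProduct_mulVec_nonneg (fun i => (v i).im)
  simp only [star_trivial] at h1 h2
  linarith

lemma re_quad_pos {R : Matrix n n ℝ} (hR : R.PosDef) {v : n → ℂ} (hv : v ≠ 0) :
    0 < (star v ⬝ᵥ ((R.map (algebraMap ℝ ℂ)) *ᵥ v)).re := by
  rw [re_quad]
  by_cases hre : (fun i => (v i).re) = 0
  · have him : (fun i => (v i).im) ≠ 0 := by
      intro h; apply hv; funext i
      have h1 : (v i).re = 0 := congrFun hre i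
      have h2 : (v i).im = 0 := congrFun h i
      exact Complex.ext h1 h2
    have := hR.dotProduct_mulVec_pos him
    have h0 := hR.posSemidef.dotProduct_mulVec_nonneg (fun i => (v i).re)
    simp only [star_trivial] at this h0
    linarith
  · have := hR.dotProduct_mulVec_pos hre
    have h0 := hR.posSemidef.dotProduct_mulVec_nonneg (fun i => (v i).im)
    simp only [star_trivial] at this h0
    linarith

/-- Lyapunov certificate implies stability. -/
lemma isStable_of_lyap (F S : Matrix n n ℝ) (hS : S.PosDef)
    (hT : (-(Fᵀ * S + S * F)).PosDef) : IsStableMatrix F := by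
  intro z hz
  set Fc := F.map (algebraMap ℝ ℂ) with hFc
  set Sc := S.map (algebraMap ℝ ℂ) with hSc
  have h1 : ¬ IsUnit (algebraMap ℂ (Matrix n n ℂ) z - Fc) := spectrum.mem_iff.mp hz
  have h2 : (algebraMap ℂ (Matrix n n ℂ) z - Fc).det = 0 := by
    by_contra hd
    exact h1 ((Matrix.isUnit_iff_isUnit_det _).mpr (Ne.isUnit hd))
  obtain ⟨v, hv0, hv⟩ := Matrix.exists_mulVec_eq_zero_iff.mpr h2
  have hFv : Fc *ᵥ v = z • v := by
    have h3 : (algebraMap ℂ (Matrix n n ℂ) z - Fc) *ᵥ v = 0 := hv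
    rw [sub_mulVec, Algebra.algebraMap_eq_smul_one, smul_mulVec, one_mulVec,
      sub_eq_zero] at h3
    exact h3.symm
  set a : ℂ := star v ⬝ᵥ (Sc *ᵥ v) with ha
  have hstar : Fc *ᵥ star v = star (Fc *ᵥ v) := by
    funext i
    simp only [mulVec, dotProduct, Pi.star_apply, star_sum, star_mul']
    refine Finset.sum_congr rfl fun j _ => ?_
    simp [hFc, Matrix.map_apply, Complex.conj_ofReal, mul_comm]
  have key : star v ⬝ᵥ (((Fᵀ * S + S * F).map (algebraMap ℝ ℂ)) *ᵥ v)
      = (starRingEnd ℂ z + z) * a := by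
    have hmadd : (Fᵀ * S + S * F).map (algebraMap ℝ ℂ)
        = (Fᵀ * S).map (algebraMap ℝ ℂ) + (S * F).map (algebraMap ℝ ℂ) := by
      ext i j; simp [Matrix.map_apply]
    rw [hmadd, Matrix.map_mul, Matrix.map_mul, Matrix.transpose_map]
    rw [add_mulVec, dotProduct_add, ← mulVec_mulVec, ← mulVec_mulVec]
    rw [dotProduct_mulVec (star v) (F.map (algebraMap ℝ ℂ))ᵀ, vecMul_transpose, ← hFc, ← hSc,
      hstar, hFv, mulVec_smul, dotProduct_smul, star_smul, smul_dotProduct]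
    simp only [smul_eq_mul, RCLike.star_def, ← ha]
    ring
  have hpos := re_quad_pos hT hv0
  have hSpos := re_quad_pos hS hv0
  rw [← hSc] at hSpos
  have hneg : ((starRingEnd ℂ z + z) * a).re < 0 := by
    have : ((-(Fᵀ * S + S * F)).map (algebraMap ℝ ℂ)) = -((Fᵀ * S + S * F).map (algebraMap ℝ ℂ)) := by
      ext i j; simp [Matrix.map_apply]
    rw [this] at hpos
    rw [neg_mulVec, dotProduct_neg, Complex.neg_re, key] at hpos
    linarith
  have hc : starRingEnd ℂ z + z = ((2 * z.re : ℝ) : ℂ) := by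
    rw [add_comm]; exact Complex.add_conj z
  rw [hc] at hneg
  have : (((2 * z.re : ℝ) : ℂ) * a).re = 2 * z.re * a.re := by
    simp [Complex.mul_re]
  rw [this] at hneg
  nlinarith


set_option linter.unusedSectionVars false

section RealHelpers
variable {p q : Type} [Fintype p] [Fintype q] [DecidableEq p] [DecidableEq q]

lemma psd_congr {R : Matrix p p ℝ} (hR : R.PosSemidef) (Z : Matrix p q ℝ) :
    (Zᵀ * R * Z).PosSemidef := by
  have := hR.conjTranspose_mul_mul_same Z
  rwa [Matrix.conjTranspose_eq_transpose_of_trivial] at this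

lemma psd_smul {R : Matrix p p ℝ} (hR : R.PosSemidef) {c : ℝ} (hc : 0 ≤ c) :
    (c • R).PosSemidef := by
  refine Matrix.PosSemidef.of_dotProduct_mulVec_nonneg (Matrix.IsHermitian.ext fun i j => ?_) fun x => ?_
  · have hsym := hR.1.apply i j
    simp only [star_trivial] at hsym
    simp [Matrix.smul_apply, hsym]
  · rw [Matrix.smul_mulVec, dotProduct_smul, smul_eq_mul]
    exact mul_nonneg hc (hR.dotProduct_mulVec_nonneg x)

lemma quad_smul (R : Matrix p p ℝ) (t : ℝ) (u : p → ℝ) :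
    (t • u) ⬝ᵥ (R *ᵥ (t • u)) = t ^ 2 * (u ⬝ᵥ (R *ᵥ u)) := by
  rw [mulVec_smul, dotProduct_smul, smul_dotProduct]
  simp [smul_eq_mul]; ring

lemma continuous_quad (R : Matrix p p ℝ) : Continuous fun x : p → ℝ => x ⬝ᵥ (R *ᵥ x) := by
  simp only [dotProduct, mulVec]
  refine continuous_finset_sum _ fun i _ => (continuous_apply i).mul ?_
  exact continuous_finset_sum _ fun j _ => continuous_const.mul (continuous_apply j)

lemma exists_smul_sub_posSemidef (R N : Matrix p p ℝ) (hR : R.PosDef) (hN : N.IsHermitian) :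
    ∃ c : ℝ, 0 < c ∧ (c • R - N).PosSemidef := by
  rcases isEmpty_or_nonempty p with hp | hp
  · exact ⟨1, one_pos, Matrix.PosSemidef.of_dotProduct_mulVec_nonneg (Subsingleton.elim _ _) fun x => by simp [dotProduct]⟩
  · have hcomp := isCompact_sphere (0 : p → ℝ) 1
    have hsne : (Metric.sphere (0 : p → ℝ) 1).Nonempty := by
      rw [NormedSpace.sphere_nonempty]; norm_num
    obtain ⟨u, hu, hmin⟩ := hcomp.exists_isMinOn hsne (continuous_quad R).continuousOn
    obtain ⟨w, hw, hmax⟩ := hcomp.exists_isMaxOn hsne (continuous_quad N).continuousOn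
    set μ := u ⬝ᵥ (R *ᵥ u) with hμ
    set ν := w ⬝ᵥ (N *ᵥ w) with hν
    have hu0 : u ≠ 0 := by
      intro h; rw [← norm_eq_zero] at h; rw [mem_sphere_zero_iff_norm.mp hu] at h; norm_num at h
    have hμpos : 0 < μ := by have := hR.dotProduct_mulVec_pos hu0; simpa using this
    refine ⟨max 1 (ν / μ + 1), lt_of_lt_of_le one_pos (le_max_left _ _),
        Matrix.PosSemidef.of_dotProduct_mulVec_nonneg ?_ fun x => ?_⟩
    · have h1 : ((max 1 (ν / μ + 1)) • R).IsHermitian :=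
        (psd_smul hR.posSemidef (le_of_lt (lt_of_lt_of_le one_pos (le_max_left _ _)))).1
      exact h1.sub hN
    · rw [star_trivial, sub_mulVec, dotProduct_sub, sub_nonneg]
      by_cases hx : x = 0
      · simp [hx]
      · have hnx : 0 < ‖x‖ := norm_pos_iff.mpr hx
        set v := ‖x‖⁻¹ • x with hv
        have hvs : v ∈ Metric.sphere (0 : p → ℝ) 1 := by
          rw [mem_sphere_zero_iff_norm, hv, norm_smul]
          simp [abs_of_pos (inv_pos.mpr hnx), inv_mul_cancel₀ (ne_of_gt hnx)]
        have hxv : x = ‖x‖ • v := by rw [hv, smul_inv_smul₀ (ne_of_gt hnx)]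
        have hRv := hmin hvs
        have hNv := hmax hvs
        simp only [Set.mem_setOf_eq] at hRv hNv
        have e1 : x ⬝ᵥ (N *ᵥ x) = ‖x‖ ^ 2 * (v ⬝ᵥ (N *ᵥ v)) := by
          conv_lhs => rw [hxv]
          rw [quad_smul]
        have e2 : x ⬝ᵥ (R *ᵥ x) = ‖x‖ ^ 2 * (v ⬝ᵥ (R *ᵥ v)) := by
          conv_lhs => rw [hxv]
          rw [quad_smul]
        rw [Matrix.smul_mulVec, dotProduct_smul, smul_eq_mul, e1, e2]
        have hc1 : ν / μ + 1 ≤ max 1 (ν / μ + 1) := le_max_right _ _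
        have hRvμ : μ ≤ v ⬝ᵥ (R *ᵥ v) := hRv
        have hNvν : v ⬝ᵥ (N *ᵥ v) ≤ ν := hNv
        have hx2 : (0:ℝ) ≤ ‖x‖ ^ 2 := sq_nonneg _
        have key : v ⬝ᵥ (N *ᵥ v) ≤ (max 1 (ν / μ + 1)) * (v ⬝ᵥ (R *ᵥ v)) := by
          have h2 : ν ≤ (ν / μ + 1) * μ := by
            rw [add_mul, div_mul_cancel₀ _ (ne_of_gt hμpos)]; linarith
          calc v ⬝ᵥ (N *ᵥ v) ≤ ν := hNvν
            _ ≤ (ν / μ + 1) * μ := h2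
            _ ≤ (max 1 (ν / μ + 1)) * (v ⬝ᵥ (R *ᵥ v)) := by
                apply mul_le_mul hc1 hRvμ (le_of_lt hμpos)
                exact le_trans (by norm_num) (le_max_left _ _)
        nlinarith
end RealHelpers

set_option linter.unusedSectionVars false
set_option maxHeartbeats 1000000

section Lyap
variable {n : Type} [Fintype n] [DecidableEq n]

attribute [local instance] Matrix.linftyOpNormedAddCommGroup Matrix.linftyOpNormedRing
  Matrix.linftyOpNormedAlgebra

lemma dotProduct_star_self_eq (y : n → ℂ) :
    star y ⬝ᵥ y = ((∑ i, Complex.normSq (y i) : ℝ) : ℂ) := by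
  push_cast
  simp only [dotProduct, Pi.star_apply, RCLike.star_def]
  exact Finset.sum_congr rfl fun i _ => (Complex.normSq_eq_conj_mul_self).symm

lemma dotProduct_star_self_pos {x : n → ℂ} (hx : x ≠ 0) :
    0 < ((∑ i, Complex.normSq (x i) : ℝ)) := by
  obtain ⟨i, hi⟩ : ∃ i, x i ≠ 0 := by
    by_contra h; push_neg at h; exact hx (funext h)
  exact Finset.sum_pos' (fun j _ => Complex.normSq_nonneg _)
    ⟨i, Finset.mem_univ i, Complex.normSq_pos.mpr hi⟩

lemma quad_conjTranspose_mul (B : Matrix n n ℂ) (x : n → ℂ) :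
    star x ⬝ᵥ ((Bᴴ * B) *ᵥ x) = star (B *ᵥ x) ⬝ᵥ (B *ᵥ x) := by
  rw [← mulVec_mulVec, dotProduct_mulVec, ← Matrix.star_mulVec]

/-- norm bound from spectral radius. -/
lemma eventually_pow_norm_le (A : Matrix n n ℂ) (hsr : spectralRadius ℂ A < 1) :
    ∃ r : NNReal, r < 1 ∧ ∀ᶠ k : ℕ in atTop, ‖A ^ k‖ ≤ (r : ℝ) ^ k := by
  obtain ⟨r, hρr, hr1⟩ := ENNReal.lt_iff_exists_nnreal_btwn.mp hsr
  refine ⟨r, by exact_mod_cast hr1, ?_⟩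
  have hG := spectrum.pow_nnnorm_pow_one_div_tendsto_nhds_spectralRadius A
  have hev := hG.eventually_lt_const hρr
  filter_upwards [hev, eventually_ge_atTop 1] with k hk hk1
  have hk0 : (k : ℝ) ≠ 0 := by positivity
  have h1 : ((‖A ^ k‖₊ : ℝ≥0∞) ^ (1 / (k:ℝ))) ^ (k:ℝ) ≤ (r : ℝ≥0∞) ^ (k:ℝ) :=
    ENNReal.rpow_le_rpow (le_of_lt hk) (by positivity)
  rw [← ENNReal.rpow_mul, one_div, inv_mul_cancel₀ hk0, ENNReal.rpow_one,
    ENNReal.rpow_natCast] at h1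
  have h2 : (‖A ^ k‖₊ : ℝ≥0∞) ≤ ((r ^ k : NNReal) : ℝ≥0∞) := by
    rw [ENNReal.coe_pow]; exact h1
  rw [ENNReal.coe_le_coe] at h2
  calc ‖A ^ k‖ = ((‖A ^ k‖₊ : NNReal) : ℝ) := rfl
    _ ≤ ((r ^ k : NNReal) : ℝ) := by exact_mod_cast h2
    _ = (r : ℝ) ^ k := by push_cast; ring

lemma norm_one_add_sq (c : ℝ) (z : ℂ) :
    ‖1 + (c:ℂ) * z‖ ^ 2 = (1 + c * z.re) ^ 2 + (c * z.im) ^ 2 := by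
  rw [Complex.sq_norm, Complex.normSq_apply]
  simp only [Complex.add_re, Complex.add_im, Complex.mul_re, Complex.mul_im,
    Complex.one_re, Complex.one_im, Complex.ofReal_re, Complex.ofReal_im]
  ring

lemma radius_lt_one_of_forall {A : Matrix n n ℂ} (hz : ∀ z ∈ spectrum ℂ A, ‖z‖₊ < 1) :
    spectralRadius ℂ A < 1 := by
  rcases Set.eq_empty_or_nonempty (spectrum ℂ A) with he | hne
  · rw [spectralRadius]
    simp [he]
  · have := spectrum.spectralRadius_lt_of_forall_lt_of_nonempty hne (r := 1) (fun k hk => hz k hk)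
    simpa using this

lemma star_mem_spectrum_conjTranspose {A : Matrix n n ℂ} {z : ℂ}
    (hz : z ∈ spectrum ℂ Aᴴ) : (starRingEnd ℂ) z ∈ spectrum ℂ A := by
  rw [spectrum.mem_iff] at hz ⊢
  intro hu
  apply hz
  have key : algebraMap ℂ (Matrix n n ℂ) z - Aᴴ = (algebraMap ℂ (Matrix n n ℂ) ((starRingEnd ℂ) z) - A)ᴴ := by
    rw [conjTranspose_sub]
    congr 1
    rw [Algebra.algebraMap_eq_smul_one, Algebra.algebraMap_eq_smul_one, conjTranspose_smul,
      conjTranspose_one]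
    simp [RCLike.star_def]
  rw [key, Matrix.isUnit_iff_isUnit_det, Matrix.det_conjTranspose, isUnit_star,
    ← Matrix.isUnit_iff_isUnit_det]
  exact hu

/-- Choice of step size. -/
lemma exists_step (Mc : Matrix n n ℂ) (hM : ∀ z ∈ spectrum ℂ Mc, z.re < 0) :
    ∃ h : ℝ, 0 < h ∧ ∀ z ∈ spectrum ℂ Mc, ‖1 + (h:ℂ) * z‖₊ < 1 := by
  rcases Set.eq_empty_or_nonempty (spectrum ℂ Mc) with he | hne
  · exact ⟨1, one_pos, fun z hz => by rw [he] at hz; exact absurd hz (Set.notMem_empty z)⟩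
  · have hK := spectrum.isCompact (𝕜 := ℂ) Mc
    obtain ⟨z₀, hz₀, hmax⟩ := hK.exists_isMaxOn hne Complex.continuous_re.continuousOn
    obtain ⟨z₁, hz₁, hmaxN⟩ := hK.exists_isMaxOn hne continuous_norm.continuousOn
    set δ := -z₀.re with hδ
    have hδpos : 0 < δ := by have := hM z₀ hz₀; simp [hδ]; linarith
    set R := ‖z₁‖ with hR
    have hRz : ∀ z ∈ spectrum ℂ Mc, ‖z‖ ≤ R := fun z hz => hmaxN hz
    have hRpos : 0 < R := by
      have h1 : δ ≤ ‖z₀‖ := by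
        have : |z₀.re| ≤ ‖z₀‖ := Complex.abs_re_le_norm z₀
        rw [abs_of_neg (by linarith [hM z₀ hz₀])] at this
        linarith
      linarith [hRz z₀ hz₀]
    refine ⟨δ / R ^ 2, by positivity, fun z hz => ?_⟩
    have h1 : z.re ≤ -δ := by have := hmax hz; simpa [hδ] using this
    have h2 : ‖z‖ ≤ R := hRz z hz
    have h3 : ‖z‖ ^ 2 = z.re ^ 2 + z.im ^ 2 := by
      rw [Complex.sq_norm, Complex.normSq_apply]; ring
    set c := δ / R ^ 2 with hc
    have hcpos : 0 < c := by positivity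
    have hcR : c * R ^ 2 = δ := by rw [hc]; field_simp
    rw [← NNReal.coe_lt_coe]
    push_cast
    have h4 : ‖1 + (c:ℂ) * z‖ ^ 2 < 1 := by
      rw [norm_one_add_sq]
      have e1 : (1 + c * z.re) ^ 2 + (c * z.im) ^ 2
          = 1 + 2 * c * z.re + c ^ 2 * (z.re ^ 2 + z.im ^ 2) := by ring
      have hz2 : z.re ^ 2 + z.im ^ 2 ≤ R ^ 2 := by
        rw [← h3]; nlinarith [norm_nonneg z]
      have e2 : c ^ 2 * (z.re ^ 2 + z.im ^ 2) ≤ c ^ 2 * R ^ 2 :=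
        mul_le_mul_of_nonneg_left hz2 (sq_nonneg c)
      have e3 : 2 * c * z.re ≤ 2 * c * (-δ) := by nlinarith
      have e4 : c ^ 2 * R ^ 2 = c * δ := by
        calc c ^ 2 * R ^ 2 = c * (c * R ^ 2) := by ring
          _ = c * δ := by rw [hcR]
      have e5 : 0 < c * δ := by positivity
      calc (1 + c * z.re) ^ 2 + (c * z.im) ^ 2
          = 1 + 2 * c * z.re + c ^ 2 * (z.re ^ 2 + z.im ^ 2) := e1
        _ ≤ 1 + 2 * c * (-δ) + c ^ 2 * R ^ 2 := by linarith
        _ = 1 - c * δ := by rw [e4]; ring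
        _ < 1 := by linarith
    have hnn : 0 ≤ ‖1 + (c:ℂ) * z‖ := norm_nonneg _
    by_contra hcon
    push_neg at hcon
    have : 1 ≤ ‖1 + (c:ℂ) * z‖ ^ 2 := by nlinarith
    linarith

/-- shifted spectrum membership. -/
lemma spectrum_shift {Mc : Matrix n n ℂ} {h : ℝ} (hh : h ≠ 0) {z : ℂ}
    (hz : z ∈ spectrum ℂ (1 + (h:ℂ) • Mc)) : (z - 1) / (h:ℂ) ∈ spectrum ℂ Mc := by
  rw [spectrum.mem_iff] at hz ⊢
  intro hu
  apply hz
  have hc : (h : ℂ) ≠ 0 := by exact_mod_cast hh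
  have key : algebraMap ℂ (Matrix n n ℂ) z - (1 + (h:ℂ) • Mc)
      = ((h:ℂ) • (1 : Matrix n n ℂ)) * (algebraMap ℂ (Matrix n n ℂ) ((z - 1)/(h:ℂ)) - Mc) := by
    rw [Algebra.algebraMap_eq_smul_one, Algebra.algebraMap_eq_smul_one]
    rw [mul_sub, smul_mul_assoc, one_mul, smul_smul, mul_div_cancel₀ _ hc, smul_mul_assoc, one_mul]
    rw [sub_smul, one_smul]
    abel
  rw [key]
  have hu1 : IsUnit ((h:ℂ) • (1 : Matrix n n ℂ)) := by
    rw [← Algebra.algebraMap_eq_smul_one]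
    exact (IsUnit.mk0 _ hc).map (algebraMap ℂ (Matrix n n ℂ))
  exact hu1.mul hu

lemma cpsd_smul_real {R : Matrix n n ℂ} (hR : R.PosSemidef) {c : ℝ} (hc : 0 ≤ c) :
    ((c:ℂ) • R).PosSemidef := by
  refine Matrix.PosSemidef.of_dotProduct_mulVec_nonneg ?_ fun x => ?_
  · rw [Matrix.IsHermitian, conjTranspose_smul, hR.1]
    simp [Complex.conj_ofReal]
  · rw [Matrix.smul_mulVec, dotProduct_smul, smul_eq_mul]
    have h1 : (0:ℂ) ≤ (c:ℂ) := by exact_mod_cast Complex.zero_le_real.mpr hc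
    exact mul_nonneg h1 (hR.dotProduct_mulVec_nonneg x)

lemma exists_lyap (Mc : Matrix n n ℂ) (hM : ∀ z ∈ spectrum ℂ Mc, z.re < 0) :
    ∃ P : Matrix n n ℂ, P.PosDef ∧ (-(Mcᴴ * P + P * Mc)).PosDef := by
  obtain ⟨h, hpos, hstep⟩ := exists_step Mc hM
  set A : Matrix n n ℂ := 1 + (h:ℂ) • Mc with hA
  have hh0 : h ≠ 0 := ne_of_gt hpos
  have hch0 : (h:ℂ) ≠ 0 := by exact_mod_cast hh0
  have hbnd : ∀ z ∈ spectrum ℂ A, ‖z‖₊ < 1 := by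
    intro z hz
    have hw := spectrum_shift hh0 hz
    have h1 := hstep _ hw
    have he : 1 + (h:ℂ) * ((z - 1)/(h:ℂ)) = z := by field_simp; ring
    rwa [he] at h1
  have hrad : spectralRadius ℂ A < 1 := radius_lt_one_of_forall hbnd
  have hradH : spectralRadius ℂ Aᴴ < 1 := by
    apply radius_lt_one_of_forall
    intro z hz
    have h1 := hbnd _ (star_mem_spectrum_conjTranspose hz)
    rwa [← RCLike.star_def, nnnorm_star] at h1
  obtain ⟨r, hr1, hev⟩ := eventually_pow_norm_le A hrad
  obtain ⟨r', hr'1, hev'⟩ := eventually_pow_norm_le Aᴴ hradH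
  set f : ℕ → Matrix n n ℂ := fun k => (Aᴴ) ^ k * A ^ k with hf
  have hsum : Summable f := by
    apply Summable.of_norm_bounded_eventually (g := fun k => ((r' : ℝ) * (r : ℝ)) ^ k)
    · apply summable_geometric_of_lt_one (by positivity)
      have hr : (r:ℝ) < 1 := by exact_mod_cast hr1
      have hr' : (r':ℝ) < 1 := by exact_mod_cast hr'1
      nlinarith [r.coe_nonneg, r'.coe_nonneg]
    · rw [Nat.cofinite_eq_atTop]
      filter_upwards [hev, hev'] with k h1 h2
      calc ‖f k‖ ≤ ‖(Aᴴ) ^ k‖ * ‖A ^ k‖ := norm_mul_le _ _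
        _ ≤ (r':ℝ) ^ k * (r:ℝ) ^ k := by
            apply mul_le_mul h2 h1 (norm_nonneg _) (by positivity)
        _ = ((r':ℝ) * (r:ℝ)) ^ k := by ring
  set P := ∑' k, f k with hP
  have hcomplete : CompleteSpace (Matrix n n ℂ) := inferInstance
  -- the key identity P = 1 + Aᴴ * P * A
  let L : Matrix n n ℂ →L[ℂ] Matrix n n ℂ :=
    LinearMap.toContinuousLinearMap ((LinearMap.mulLeft ℂ (Aᴴ)).comp (LinearMap.mulRight ℂ A))
  have hLapp : ∀ N, L N = Aᴴ * N * A := by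
    intro N
    simp only [L, LinearMap.coe_toContinuousLinearMap', LinearMap.coe_comp,
      Function.comp_apply, LinearMap.mulRight_apply, LinearMap.mulLeft_apply]
    rw [Matrix.mul_assoc]
  have hid : P = 1 + Aᴴ * P * A := by
    have h1 := (hsum.hasSum.mapL L).tsum_eq
    have h2 : ∀ k, L (f k) = f (k + 1) := by
      intro k
      rw [hLapp]
      show Aᴴ * ((Aᴴ) ^ k * A ^ k) * A = (Aᴴ) ^ (k+1) * A ^ (k+1)
      rw [pow_succ' (Aᴴ) k, pow_succ A k]
      simp only [Matrix.mul_assoc]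
    have h3 : ∑' k, f (k + 1) = Aᴴ * P * A := by
      calc ∑' k, f (k + 1) = ∑' k, L (f k) := tsum_congr fun k => (h2 k).symm
        _ = L P := h1
        _ = Aᴴ * P * A := hLapp P
    have h4 := Summable.tsum_eq_zero_add hsum
    rw [h3] at h4
    have h5 : f 0 = 1 := by simp [hf]
    rw [h5] at h4
    exact h4
  -- P is Hermitian
  have hherm : P.IsHermitian := by
    let ψ : Matrix n n ℂ →ₗ[ℝ] Matrix n n ℂ :=
      { toFun := fun N => Nᴴ
        map_add' := fun a b => conjTranspose_add a b
        map_smul' := fun c N => by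
          ext i j
          simp [Matrix.conjTranspose_apply, Matrix.smul_apply, star_smul] }
    have h1 := (hsum.hasSum.mapL (LinearMap.toContinuousLinearMap ψ)).tsum_eq
    have h2 : ∀ k, (f k)ᴴ = f k := by
      intro k
      rw [hf]
      simp only
      rw [conjTranspose_mul, ← conjTranspose_pow, conjTranspose_conjTranspose]
    have h3 : ∀ k, (LinearMap.toContinuousLinearMap ψ) (f k) = f k := by
      intro k
      simp only [LinearMap.coe_toContinuousLinearMap', ψ, LinearMap.coe_mk, AddHom.coe_mk]
      exact h2 k
    have h4 : (LinearMap.toContinuousLinearMap ψ) P = Pᴴ := by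
      simp only [LinearMap.coe_toContinuousLinearMap', ψ, LinearMap.coe_mk, AddHom.coe_mk]
    rw [Matrix.IsHermitian, ← h4, ← h1]
    exact tsum_congr h3
  -- quadratic form of P
  have hquad : ∀ x : n → ℂ,
      HasSum (fun k => star ((A ^ k) *ᵥ x) ⬝ᵥ ((A ^ k) *ᵥ x)) (star x ⬝ᵥ (P *ᵥ x)) := by
    intro x
    let φ : Matrix n n ℂ →ₗ[ℂ] ℂ :=
      { toFun := fun N => star x ⬝ᵥ (N *ᵥ x)
        map_add' := fun a b => by simp [Matrix.add_mulVec, dotProduct_add]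
        map_smul' := fun c N => by simp [Matrix.smul_mulVec, dotProduct_smul] }
    have h1 := hsum.hasSum.mapL (LinearMap.toContinuousLinearMap φ)
    have h2 : ∀ k, (LinearMap.toContinuousLinearMap φ) (f k)
        = star ((A ^ k) *ᵥ x) ⬝ᵥ ((A ^ k) *ᵥ x) := by
      intro k
      simp only [LinearMap.coe_toContinuousLinearMap', φ, LinearMap.coe_mk, AddHom.coe_mk]
      rw [hf]
      simp only
      rw [← conjTranspose_pow]
      exact quad_conjTranspose_mul (A ^ k) x
    have h3 : (LinearMap.toContinuousLinearMap φ) P = star x ⬝ᵥ (P *ᵥ x) := by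
      simp only [LinearMap.coe_toContinuousLinearMap', φ, LinearMap.coe_mk, AddHom.coe_mk]
    rw [← h3]
    exact HasSum.congr_fun h1 fun k => (h2 k).symm
  -- P is positive definite
  have hPpos : P.PosDef := by
    refine Matrix.PosDef.of_dotProduct_mulVec_pos hherm fun x hx => ?_
    have h1 := hquad x
    have h2 : ∀ k, star ((A ^ k) *ᵥ x) ⬝ᵥ ((A ^ k) *ᵥ x)
        = ((∑ i, Complex.normSq (((A ^ k) *ᵥ x) i) : ℝ) : ℂ) := fun k =>
      dotProduct_star_self_eq _
    set g : ℕ → ℝ := fun k => ∑ i, Complex.normSq (((A ^ k) *ᵥ x) i) with hg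
    have h3 : HasSum (fun k => ((g k : ℝ) : ℂ)) (star x ⬝ᵥ (P *ᵥ x)) :=
      (hquad x).congr_fun fun k => (h2 k).symm
    have hre : HasSum g ((star x ⬝ᵥ (P *ᵥ x)).re) := by
      have := h3.mapL Complex.reCLM
      simpa using this
    have him : (star x ⬝ᵥ (P *ᵥ x)).im = 0 := by
      have h4 := h3.mapL Complex.imCLM
      have h5 : (fun k => Complex.imCLM ((g k : ℝ) : ℂ)) = fun _ => (0:ℝ) := by
        funext k; simp
      rw [h5] at h4
      exact (h4.unique hasSum_zero).symm ▸ rfl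
    have hg0 : 0 < g 0 := by
      have : (A ^ 0) *ᵥ x = x := by simp
      rw [hg]; simp only [this]
      exact dotProduct_star_self_pos hx
    have hpos' : 0 < (star x ⬝ᵥ (P *ᵥ x)).re := by
      have := Summable.tsum_pos hre.summable (fun k => Finset.sum_nonneg fun i _ => Complex.normSq_nonneg _) 0 hg0
      rwa [hre.tsum_eq] at this
    rw [Complex.lt_def]
    constructor
    · simpa using hpos'
    · simpa using him.symm
  -- final algebra
  have hAH : Aᴴ = 1 + (h:ℂ) • Mcᴴ := by
    rw [hA, conjTranspose_add, conjTranspose_smul, conjTranspose_one]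
    simp [Complex.conj_ofReal]
  have hexp : Aᴴ * P * A = P + (h:ℂ) • (P * Mc) + (h:ℂ) • (Mcᴴ * P)
      + ((h:ℂ) * (h:ℂ)) • (Mcᴴ * P * Mc) := by
    rw [hAH, hA]
    simp only [Matrix.add_mul, Matrix.mul_add, Matrix.smul_mul, Matrix.mul_smul,
      Matrix.one_mul, Matrix.mul_one, smul_smul, smul_add]
    abel
  have h0 : (0 : Matrix n n ℂ) = 1 + (h:ℂ) • (P * Mc) + (h:ℂ) • (Mcᴴ * P)
      + ((h:ℂ) * (h:ℂ)) • (Mcᴴ * P * Mc) := by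
    have h1 := hid
    rw [hexp] at h1
    calc (0 : Matrix n n ℂ) = P - P := by rw [sub_self]
      _ = (1 + (P + (h:ℂ) • (P * Mc) + (h:ℂ) • (Mcᴴ * P)
          + ((h:ℂ) * (h:ℂ)) • (Mcᴴ * P * Mc))) - P := by
          nth_rewrite 1 [h1]; abel
      _ = 1 + (h:ℂ) • (P * Mc) + (h:ℂ) • (Mcᴴ * P)
          + ((h:ℂ) * (h:ℂ)) • (Mcᴴ * P * Mc) := by abel
  have h2 := congrArg (fun X : Matrix n n ℂ => ((h:ℂ)⁻¹) • X) h0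
  simp only [smul_zero, smul_add, smul_smul, inv_mul_cancel₀ hch0, one_smul] at h2
  have hc2 : (h:ℂ)⁻¹ * ((h:ℂ) * (h:ℂ)) = (h:ℂ) := by field_simp
  rw [hc2] at h2
  -- h2 : 0 = (h:ℂ)⁻¹ • 1 + P * Mc + Mcᴴ * P + (h:ℂ) • (Mcᴴ * P * Mc)
  have htarget : -(Mcᴴ * P + P * Mc) = ((h:ℂ)⁻¹) • (1 : Matrix n n ℂ)
      + (h:ℂ) • (Mcᴴ * P * Mc) := by
    rw [neg_eq_iff_add_eq_zero]
    rw [h2]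
    abel
  have hA1 : (((h:ℂ)⁻¹) • (1 : Matrix n n ℂ)).PosDef := by
    have hcast : ((h:ℂ)⁻¹) = ((h⁻¹ : ℝ) : ℂ) := by push_cast; ring
    refine Matrix.PosDef.of_dotProduct_mulVec_pos ?_ fun x hx => ?_
    · rw [Matrix.IsHermitian, conjTranspose_smul, conjTranspose_one, hcast]
      simp [Complex.conj_ofReal]
    · rw [Matrix.smul_mulVec, Matrix.one_mulVec, dotProduct_smul, smul_eq_mul,
        dotProduct_star_self_eq, hcast, ← Complex.ofReal_mul]
      have hp1 : 0 < h⁻¹ * ∑ i, Complex.normSq (x i) := by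
        have := dotProduct_star_self_pos hx
        positivity
      exact_mod_cast Complex.zero_lt_real.mpr hp1
  have hA2 : ((h:ℂ) • (Mcᴴ * P * Mc)).PosSemidef :=
    cpsd_smul_real (hPpos.posSemidef.conjTranspose_mul_mul_same Mc) hpos.le
  exact ⟨P, hPpos, by rw [htarget]; exact hA1.add_posSemidef hA2⟩

end Lyap

set_option linter.unusedSectionVars false
set_option maxHeartbeats 1000000

section Real2
variable {n : Type} [Fintype n] [DecidableEq n]


lemma re_quad_real_vec (Pc : Matrix n n ℂ) (x : n → ℝ) :
    (star (fun i => ((x i : ℂ))) ⬝ᵥ (Pc *ᵥ fun i => ((x i : ℂ)))).re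
      = x ⬝ᵥ ((Matrix.of fun i j => (Pc i j).re) *ᵥ x) := by
  simp only [dotProduct, mulVec, Pi.star_apply, Matrix.of_apply]
  rw [Complex.re_sum]
  refine Finset.sum_congr rfl fun i _ => ?_
  rw [Finset.mul_sum, Complex.re_sum, Finset.mul_sum]
  refine Finset.sum_congr rfl fun j _ => ?_
  simp only [RCLike.star_def, Complex.conj_ofReal, Complex.mul_re, Complex.ofReal_re,
    Complex.ofReal_im, Complex.mul_im]
  ring

lemma reMat_posDef {Pc : Matrix n n ℂ} (hPc : Pc.PosDef) :
    (Matrix.of fun i j => (Pc i j).re).PosDef := by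
  refine Matrix.PosDef.of_dotProduct_mulVec_pos ?_ ?_
  · apply Matrix.IsHermitian.ext
    intro i j
    have h1 := hPc.1.apply i j
    rw [star_trivial]
    simp only [Matrix.of_apply]
    rw [← h1]
    simp [RCLike.star_def]
  · intro x hx
    have hxc : (fun i => ((x i : ℝ) : ℂ)) ≠ 0 := by
      intro hc
      apply hx
      funext i
      have := congrFun hc i
      simpa using this
    have h1 := hPc.dotProduct_mulVec_pos hxc
    rw [Complex.lt_def] at h1
    have h2 := h1.1
    simp only [Complex.zero_re] at h2
    rw [re_quad_real_vec] at h2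
    rw [star_trivial]
    exact h2

lemma posdef_smul {R : Matrix n n ℝ} (hR : R.PosDef) {c : ℝ} (hc : 0 < c) :
    (c • R).PosDef := by
  refine Matrix.PosDef.of_dotProduct_mulVec_pos ?_ fun x hx => ?_
  · apply Matrix.IsHermitian.ext
    intro i j
    have hsym := hR.1.apply i j
    simp only [star_trivial] at hsym
    simp [Matrix.smul_apply, hsym]
  · rw [Matrix.smul_mulVec, dotProduct_smul, smul_eq_mul]
    exact mul_pos hc (by simpa using hR.dotProduct_mulVec_pos hx)

lemma exists_real_lyap (M : Matrix n n ℝ)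
    (hM : ∀ z ∈ spectrum ℂ (M.map (algebraMap ℝ ℂ)), z.re < 0) :
    ∃ Q : Matrix n n ℝ, Q.PosDef ∧ (-(M * Q + Q * Mᵀ)).PosDef := by
  have hstab : ∀ z ∈ spectrum ℂ ((Mᵀ).map (algebraMap ℝ ℂ)), z.re < 0 := by
    intro z hz
    apply hM
    rw [spectrum.mem_iff] at hz ⊢
    intro hu
    apply hz
    have heq : algebraMap ℂ (Matrix n n ℂ) z - (Mᵀ).map (algebraMap ℝ ℂ)
        = (algebraMap ℂ (Matrix n n ℂ) z - M.map (algebraMap ℝ ℂ))ᵀ := by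
      rw [Matrix.transpose_sub, Matrix.transpose_map]
      congr 1
      rw [Algebra.algebraMap_eq_smul_one, Matrix.transpose_smul, Matrix.transpose_one]
    rw [heq, Matrix.isUnit_iff_isUnit_det, Matrix.det_transpose,
      ← Matrix.isUnit_iff_isUnit_det]
    exact hu
  obtain ⟨Pc, hPc, hLy⟩ := exists_lyap ((Mᵀ).map (algebraMap ℝ ℂ)) hstab
  refine ⟨Matrix.of fun i j => (Pc i j).re, reMat_posDef hPc, ?_⟩
  have h2 := reMat_posDef hLy
  have heq : (Matrix.of fun i j =>
      ((-(((Mᵀ).map (algebraMap ℝ ℂ))ᴴ * Pc + Pc * ((Mᵀ).map (algebraMap ℝ ℂ)))) i j).re)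
      = -(M * (Matrix.of fun i j => (Pc i j).re)
          + (Matrix.of fun i j => (Pc i j).re) * Mᵀ) := by
    ext i j
    simp only [Matrix.neg_apply, Matrix.add_apply, Matrix.mul_apply, Matrix.of_apply,
      Matrix.conjTranspose_apply, Matrix.map_apply, Matrix.transpose_apply]
    rw [Complex.neg_re, Complex.add_re, Complex.re_sum, Complex.re_sum]
    congr 2
    · refine Finset.sum_congr rfl fun k _ => ?_
      simp [RCLike.star_def, Complex.conj_ofReal, Complex.re_ofReal_mul]
    · refine Finset.sum_congr rfl fun k _ => ?_
      rw [mul_comm]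
      simp [Complex.re_ofReal_mul, mul_comm]
  rw [← heq]
  exact h2

end Real2

set_option linter.unusedSectionVars false
set_option maxHeartbeats 1000000

section Blocks
variable {U W : Type} [Fintype U] [Fintype W] [DecidableEq U] [DecidableEq W]

lemma toBlocks₁₁_mul (X Y : Matrix (U ⊕ W) (U ⊕ W) ℝ) :
    (X * Y).toBlocks₁₁ = X.toBlocks₁₁ * Y.toBlocks₁₁ + X.toBlocks₁₂ * Y.toBlocks₂₁ := by
  ext i j
  simp [Matrix.mul_apply, Matrix.toBlocks₁₁, Matrix.toBlocks₁₂, Matrix.toBlocks₂₁,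
    Fintype.sum_sum_type]

lemma toBlocks₁₂_mul (X Y : Matrix (U ⊕ W) (U ⊕ W) ℝ) :
    (X * Y).toBlocks₁₂ = X.toBlocks₁₁ * Y.toBlocks₁₂ + X.toBlocks₁₂ * Y.toBlocks₂₂ := by
  ext i j
  simp [Matrix.mul_apply, Matrix.toBlocks₁₁, Matrix.toBlocks₁₂, Matrix.toBlocks₂₂,
    Fintype.sum_sum_type]

lemma toBlocks₂₁_mul (X Y : Matrix (U ⊕ W) (U ⊕ W) ℝ) :
    (X * Y).toBlocks₂₁ = X.toBlocks₂₁ * Y.toBlocks₁₁ + X.toBlocks₂₂ * Y.toBlocks₂₁ := by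
  ext i j
  simp [Matrix.mul_apply, Matrix.toBlocks₂₁, Matrix.toBlocks₁₁, Matrix.toBlocks₂₂,
    Fintype.sum_sum_type]

lemma toBlocks₂₂_mul (X Y : Matrix (U ⊕ W) (U ⊕ W) ℝ) :
    (X * Y).toBlocks₂₂ = X.toBlocks₂₁ * Y.toBlocks₁₂ + X.toBlocks₂₂ * Y.toBlocks₂₂ := by
  ext i j
  simp [Matrix.mul_apply, Matrix.toBlocks₂₁, Matrix.toBlocks₁₂, Matrix.toBlocks₂₂,
    Fintype.sum_sum_type]

lemma toBlocks₁₁_add (X Y : Matrix (U ⊕ W) (U ⊕ W) ℝ) :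
    (X + Y).toBlocks₁₁ = X.toBlocks₁₁ + Y.toBlocks₁₁ := rfl
lemma toBlocks₁₂_add (X Y : Matrix (U ⊕ W) (U ⊕ W) ℝ) :
    (X + Y).toBlocks₁₂ = X.toBlocks₁₂ + Y.toBlocks₁₂ := rfl
lemma toBlocks₂₁_add (X Y : Matrix (U ⊕ W) (U ⊕ W) ℝ) :
    (X + Y).toBlocks₂₁ = X.toBlocks₂₁ + Y.toBlocks₂₁ := rfl
lemma toBlocks₂₂_add (X Y : Matrix (U ⊕ W) (U ⊕ W) ℝ) :
    (X + Y).toBlocks₂₂ = X.toBlocks₂₂ + Y.toBlocks₂₂ := rfl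

lemma toBlocks₁₁_neg (X : Matrix (U ⊕ W) (U ⊕ W) ℝ) : (-X).toBlocks₁₁ = -X.toBlocks₁₁ := rfl
lemma toBlocks₁₂_neg (X : Matrix (U ⊕ W) (U ⊕ W) ℝ) : (-X).toBlocks₁₂ = -X.toBlocks₁₂ := rfl
lemma toBlocks₂₁_neg (X : Matrix (U ⊕ W) (U ⊕ W) ℝ) : (-X).toBlocks₂₁ = -X.toBlocks₂₁ := rfl
lemma toBlocks₂₂_neg (X : Matrix (U ⊕ W) (U ⊕ W) ℝ) : (-X).toBlocks₂₂ = -X.toBlocks₂₂ := rfl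

lemma toBlocks₁₁_transpose (X : Matrix (U ⊕ W) (U ⊕ W) ℝ) :
    (Xᵀ).toBlocks₁₁ = (X.toBlocks₁₁)ᵀ := rfl
lemma toBlocks₁₂_transpose (X : Matrix (U ⊕ W) (U ⊕ W) ℝ) :
    (Xᵀ).toBlocks₁₂ = (X.toBlocks₂₁)ᵀ := rfl
lemma toBlocks₂₁_transpose (X : Matrix (U ⊕ W) (U ⊕ W) ℝ) :
    (Xᵀ).toBlocks₂₁ = (X.toBlocks₁₂)ᵀ := rfl
lemma toBlocks₂₂_transpose (X : Matrix (U ⊕ W) (U ⊕ W) ℝ) :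
    (Xᵀ).toBlocks₂₂ = (X.toBlocks₂₂)ᵀ := rfl

/-- The big algebraic identity. -/
lemma key_identity
    (A : Matrix U U ℝ) (M12 : Matrix U W ℝ) (B : Matrix W U ℝ) (M22 : Matrix W W ℝ)
    (Q11 S11 L11 : Matrix U U ℝ) (Q12 S12 L12 : Matrix U W ℝ)
    (Q21 S21 L21 : Matrix W U ℝ) (Q22 S22 L22 P Qi : Matrix W W ℝ)
    (G : Matrix U W ℝ) (Sc D E F : Matrix U U ℝ) (H : Matrix U W ℝ) (Y : Matrix W U ℝ)
    (hG : G = Q12 * Qi) (hSc : Sc = Q11 - G * Q21) (hH : H = G - S12 * P)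
    (hY : Y = B * Sc - S22 * Hᵀ)
    (hD : D = Aᵀ - Bᵀ * P * S21) (hE : E = Bᵀ * P * B) (hF : F = D + E * (-((2⁻¹ : ℝ) • Sc)))
    (hPS : P * S22 = 1) (hSP : S22 * P = 1) (hPt : Pᵀ = P) (hS22t : S22ᵀ = S22)
    (hS12t : S12ᵀ = S21) (hS21t : S21ᵀ = S12)
    (hQi1 : Qi * Q22 = 1) (hQi2 : Q22 * Qi = 1) (hQit : Qiᵀ = Qi)
    (hQ11t : Q11ᵀ = Q11) (hQ12t : Q12ᵀ = Q21) (hQ21t : Q21ᵀ = Q12)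
    (e11 : A * Q11 + M12 * Q21 + Q11 * Aᵀ + Q12 * M12ᵀ = -(S11 + L11))
    (e12 : A * Q12 + M12 * Q22 + Q11 * Bᵀ + Q12 * M22ᵀ = -(S12 + L12))
    (e21 : B * Q11 + M22 * Q21 + Q21 * Aᵀ + Q22 * M12ᵀ = -(S21 + L21))
    (e22 : B * Q12 + M22 * Q22 + Q21 * Bᵀ + Q22 * M22ᵀ = -(S22 + L22)) :
    -(Fᵀ * Sc + Sc * F)
      = (L11 - G * L21 - L12 * Gᵀ + G * L22 * Gᵀ) + (S11 - S12 * P * S21) + Yᵀ * P * Y := by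
  have hGQ22 : G * Q22 = Q12 := by rw [hG, Matrix.mul_assoc, hQi1, Matrix.mul_one]
  have hGt : Gᵀ = Qi * Q21 := by rw [hG, Matrix.transpose_mul, hQit, hQ12t]
  have hQ22Gt : Q22 * Gᵀ = Q21 := by rw [hGt, ← Matrix.mul_assoc, hQi2, Matrix.one_mul]
  have hQ12Gt : Q12 * Gᵀ = G * Q21 := by rw [hGt, ← Matrix.mul_assoc, hG]
  have hSct : Scᵀ = Sc := by
    rw [hSc, Matrix.transpose_sub, hQ11t, Matrix.transpose_mul, hQ21t, hQ12Gt]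
  have hSc' : Sc = Q11 - Q12 * Gᵀ := by rw [hQ12Gt]; exact hSc
  have hEt : Eᵀ = E := by
    rw [hE, Matrix.transpose_mul, Matrix.transpose_mul, Matrix.transpose_transpose, hPt,
      Matrix.mul_assoc]
  have hHt : Hᵀ = Gᵀ - P * S21 := by
    rw [hH, Matrix.transpose_sub, Matrix.transpose_mul, hPt, hS12t]
  have hGX : ∀ {k : Type} (X : Matrix W k ℝ), G * (Q22 * X) = Q12 * X := fun X => by
    rw [← Matrix.mul_assoc, hGQ22]
  have hPS22X : ∀ {k : Type} (X : Matrix W k ℝ), P * (S22 * X) = X := fun X => by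
    rw [← Matrix.mul_assoc, hPS, Matrix.one_mul]
  have hS22PX : ∀ {k : Type} (X : Matrix W k ℝ), S22 * (P * X) = X := fun X => by
    rw [← Matrix.mul_assoc, hSP, Matrix.one_mul]
  have claimA : (A - G * B) * Sc + Sc * (A - G * B)ᵀ
      = (A * Q11 + M12 * Q21 + Q11 * Aᵀ + Q12 * M12ᵀ)
        - G * (B * Q11 + M22 * Q21 + Q21 * Aᵀ + Q22 * M12ᵀ)
        - (A * Q12 + M12 * Q22 + Q11 * Bᵀ + Q12 * M22ᵀ) * Gᵀ
        + G * (B * Q12 + M22 * Q22 + Q21 * Bᵀ + Q22 * M22ᵀ) * Gᵀ := by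
    nth_rewrite 1 [hSc']
    rw [hSc]
    simp only [Matrix.transpose_sub, Matrix.transpose_mul, Matrix.sub_mul, Matrix.mul_sub,
      Matrix.add_mul, Matrix.mul_add, Matrix.mul_assoc, hGX, hQ22Gt]
    abel
  have hDt : Dᵀ = (A - G * B) + H * B := by
    rw [hD, hH]
    simp only [Matrix.transpose_sub, Matrix.transpose_mul, Matrix.transpose_transpose, hPt,
      hS21t, Matrix.sub_mul, Matrix.mul_assoc]
    abel
  have hD2 : D = (A - G * B)ᵀ + Bᵀ * Hᵀ := by
    have h := congrArg Matrix.transpose hDt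
    rw [Matrix.transpose_transpose, Matrix.transpose_add, Matrix.transpose_mul] at h
    exact h
  have hF' : F = D - (2⁻¹ : ℝ) • (E * Sc) := by
    rw [hF, Matrix.mul_neg, Matrix.mul_smul, sub_eq_add_neg]
  have hFt : Fᵀ = Dᵀ - (2⁻¹ : ℝ) • (Sc * E) := by
    rw [hF', Matrix.transpose_sub, Matrix.transpose_smul, Matrix.transpose_mul, hSct, hEt]
  have h1 : Fᵀ * Sc + Sc * F = (Dᵀ * Sc + Sc * D) - Sc * (E * Sc) := by
    rw [hFt, hF']
    simp only [Matrix.sub_mul, Matrix.mul_sub, Matrix.smul_mul, Matrix.mul_smul,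
      Matrix.mul_assoc]
    module
  have E1 : Dᵀ * Sc + Sc * D
      = ((A - G * B) * Sc + Sc * (A - G * B)ᵀ) + (H * (B * Sc) + Sc * (Bᵀ * Hᵀ)) := by
    rw [hDt, hD2]
    simp only [Matrix.add_mul, Matrix.mul_add, Matrix.mul_assoc]
    abel
  have E2 : Yᵀ * P * Y
      = Sc * (E * Sc) - Sc * (Bᵀ * Hᵀ) - H * (B * Sc) + H * (S22 * Hᵀ) := by
    have hYt : Yᵀ = Sc * Bᵀ - H * S22 := by
      rw [hY, Matrix.transpose_sub, Matrix.transpose_mul, Matrix.transpose_mul, hSct, hS22t,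
        Matrix.transpose_transpose]
    rw [hYt, hY, hE]
    simp only [Matrix.sub_mul, Matrix.mul_sub, Matrix.mul_assoc, hPS22X, hS22PX]
    abel
  have E3 : S11 - S12 * P * S21
      = (S11 - G * S21 - S12 * Gᵀ + G * (S22 * Gᵀ))
        - H * (S22 * Hᵀ) := by
    rw [hHt, hH]
    simp only [Matrix.sub_mul, Matrix.mul_sub, Matrix.mul_assoc, hPS22X, hS22PX]
    abel
  rw [h1, E1, claimA, e11, e12, e21, e22, E3, E2]
  simp only [Matrix.mul_neg, Matrix.neg_mul, Matrix.mul_add, Matrix.add_mul, Matrix.mul_sub,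
    Matrix.sub_mul, Matrix.mul_assoc]
  abel

end Blocks

set_option linter.unusedSectionVars false
set_option maxHeartbeats 1000000

section Blocks2
variable {U W : Type} [Fintype U] [Fintype W] [DecidableEq U] [DecidableEq W]

lemma toBlocks₁₁_transposeX (X : Matrix (U ⊕ W) (U ⊕ W) ℝ) :
    (Xᵀ).toBlocks₁₁ = (X.toBlocks₁₁)ᵀ := rfl
lemma toBlocks₁₂_transposeX (X : Matrix (U ⊕ W) (U ⊕ W) ℝ) :
    (Xᵀ).toBlocks₁₂ = (X.toBlocks₂₁)ᵀ := rfl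
lemma toBlocks₂₁_transposeX (X : Matrix (U ⊕ W) (U ⊕ W) ℝ) :
    (Xᵀ).toBlocks₂₁ = (X.toBlocks₁₂)ᵀ := rfl
lemma toBlocks₂₂_transposeX (X : Matrix (U ⊕ W) (U ⊕ W) ℝ) :
    (Xᵀ).toBlocks₂₂ = (X.toBlocks₂₂)ᵀ := rfl

lemma dot_elim (u p : U → ℝ) (v q : W → ℝ) :
    (Sum.elim u v) ⬝ᵥ (Sum.elim p q) = u ⬝ᵥ p + v ⬝ᵥ q := by
  simp [dotProduct, Fintype.sum_sum_type]

lemma dot_G (G : Matrix U W ℝ) (x : U → ℝ) (w : W → ℝ) :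
    x ⬝ᵥ (G *ᵥ w) = (Gᵀ *ᵥ x) ⬝ᵥ w := by
  rw [dotProduct_mulVec]
  congr 1
  have h := Matrix.vecMul_transpose Gᵀ x
  rw [Matrix.transpose_transpose] at h
  exact h

lemma posDef_toBlocks₂₂ {Sg : Matrix (U ⊕ W) (U ⊕ W) ℝ} (h : Sg.PosDef) :
    Sg.toBlocks₂₂.PosDef := by
  refine Matrix.PosDef.of_dotProduct_mulVec_pos ?_ ?_
  · apply Matrix.IsHermitian.ext
    intro i j
    have h1 := h.1.apply (Sum.inr i) (Sum.inr j)
    simpa [Matrix.toBlocks₂₂] using h1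
  · intro x hx
    have hz : (Sum.elim (0 : U → ℝ) x) ≠ 0 := by
      intro hc
      apply hx
      funext w
      exact congrFun hc (Sum.inr w)
    have h1 := h.dotProduct_mulVec_pos hz
    rw [star_trivial] at h1
    conv at h1 => rw [← Matrix.fromBlocks_toBlocks Sg, Matrix.fromBlocks_mulVec]
    rw [star_trivial]
    simp only [Sum.elim_comp_inl, Sum.elim_comp_inr, Matrix.mulVec_zero, zero_add] at h1
    rw [dot_elim, zero_dotProduct, zero_add] at h1
    exact h1

lemma posDef_schur {R : Matrix (U ⊕ W) (U ⊕ W) ℝ} (h : R.PosDef) :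
    (R.toBlocks₁₁ - R.toBlocks₁₂ * R.toBlocks₂₂⁻¹ * R.toBlocks₂₁).PosDef := by
  have h22 : R.toBlocks₂₂.PosDef := posDef_toBlocks₂₂ h
  have hdet : IsUnit (R.toBlocks₂₂).det := isUnit_iff_ne_zero.mpr (ne_of_gt h22.det_pos)
  have hmul : R.toBlocks₂₂ * R.toBlocks₂₂⁻¹ = 1 := Matrix.mul_nonsing_inv _ hdet
  have hsym : Rᵀ = R := by
    rw [← Matrix.conjTranspose_eq_transpose_of_trivial]
    exact h.1
  have h11t : (R.toBlocks₁₁)ᵀ = R.toBlocks₁₁ := by rw [← toBlocks₁₁_transposeX, hsym]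
  have h12t : (R.toBlocks₁₂)ᵀ = R.toBlocks₂₁ := by rw [← toBlocks₂₁_transposeX, hsym]
  have h21t : (R.toBlocks₂₁)ᵀ = R.toBlocks₁₂ := by rw [← toBlocks₁₂_transposeX, hsym]
  have h22t : (R.toBlocks₂₂)ᵀ = R.toBlocks₂₂ := by rw [← toBlocks₂₂_transposeX, hsym]
  have hinvt : (R.toBlocks₂₂⁻¹)ᵀ = R.toBlocks₂₂⁻¹ := by
    rw [Matrix.transpose_nonsing_inv, h22t]
  refine Matrix.PosDef.of_dotProduct_mulVec_pos ?_ ?_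
  · show _ᴴ = _
    rw [Matrix.conjTranspose_eq_transpose_of_trivial,
      Matrix.transpose_sub, h11t, Matrix.transpose_mul, Matrix.transpose_mul, hinvt, h12t,
      h21t, Matrix.mul_assoc]
  · intro x hx
    set b := -(R.toBlocks₂₂⁻¹ *ᵥ (R.toBlocks₂₁ *ᵥ x)) with hb
    have hz : (Sum.elim x b) ≠ 0 := by
      intro hc
      apply hx
      funext u
      exact congrFun hc (Sum.inl u)
    have h1 := h.dotProduct_mulVec_pos hz
    rw [star_trivial] at h1
    conv at h1 => rw [← Matrix.fromBlocks_toBlocks R, Matrix.fromBlocks_mulVec]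
    simp only [Sum.elim_comp_inl, Sum.elim_comp_inr] at h1
    rw [dot_elim] at h1
    have hRb : R.toBlocks₂₂ *ᵥ b = -(R.toBlocks₂₁ *ᵥ x) := by
      rw [hb, Matrix.mulVec_neg, Matrix.mulVec_mulVec, hmul, Matrix.one_mulVec]
    rw [hRb, add_neg_cancel, dotProduct_zero, add_zero, dotProduct_add, hb,
      Matrix.mulVec_neg, dotProduct_neg] at h1
    rw [star_trivial, Matrix.sub_mulVec, dotProduct_sub, ← Matrix.mulVec_mulVec,
      ← Matrix.mulVec_mulVec]
    linarith

lemma posSemidef_tilde {L : Matrix (U ⊕ W) (U ⊕ W) ℝ} (h : L.PosSemidef) (G : Matrix U W ℝ) :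
    (L.toBlocks₁₁ - G * L.toBlocks₂₁ - L.toBlocks₁₂ * Gᵀ + G * L.toBlocks₂₂ * Gᵀ).PosSemidef := by
  have hsym : Lᵀ = L := by
    rw [← Matrix.conjTranspose_eq_transpose_of_trivial]
    exact h.1
  have h11t : (L.toBlocks₁₁)ᵀ = L.toBlocks₁₁ := by rw [← toBlocks₁₁_transposeX, hsym]
  have h12t : (L.toBlocks₁₂)ᵀ = L.toBlocks₂₁ := by rw [← toBlocks₂₁_transposeX, hsym]
  have h21t : (L.toBlocks₂₁)ᵀ = L.toBlocks₁₂ := by rw [← toBlocks₁₂_transposeX, hsym]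
  have h22t : (L.toBlocks₂₂)ᵀ = L.toBlocks₂₂ := by rw [← toBlocks₂₂_transposeX, hsym]
  refine Matrix.PosSemidef.of_dotProduct_mulVec_nonneg ?_ ?_
  · show _ᴴ = _
    rw [Matrix.conjTranspose_eq_transpose_of_trivial]
    rw [Matrix.transpose_add, Matrix.transpose_sub, Matrix.transpose_sub, h11t,
      Matrix.transpose_mul, Matrix.transpose_mul, Matrix.transpose_mul,
      Matrix.transpose_mul, Matrix.transpose_transpose, h21t, h12t, h22t, Matrix.mul_assoc]
    abel
  · intro x
    set g := Gᵀ *ᵥ x with hg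
    have h1 := h.dotProduct_mulVec_nonneg (Sum.elim x (-g))
    rw [star_trivial] at h1
    conv at h1 => rw [← Matrix.fromBlocks_toBlocks L, Matrix.fromBlocks_mulVec]
    simp only [Sum.elim_comp_inl, Sum.elim_comp_inr] at h1
    rw [dot_elim] at h1
    simp only [Matrix.mulVec_neg, dotProduct_neg, neg_dotProduct, neg_neg,
      dotProduct_add] at h1
    rw [star_trivial, Matrix.add_mulVec, Matrix.sub_mulVec, Matrix.sub_mulVec,
      dotProduct_add, dotProduct_sub, dotProduct_sub]
    simp only [← Matrix.mulVec_mulVec]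
    rw [dot_G G x (L.toBlocks₂₁ *ᵥ x), dot_G G x (L.toBlocks₂₂ *ᵥ (Gᵀ *ᵥ x)), ← hg]
    linarith
end Blocks2

end Stmt17

theorem stmt17 {U W : Type} [Fintype U] [Fintype W]
    [DecidableEq U] [DecidableEq W]
    (M Sg : Matrix (U ⊕ W) (U ⊕ W) ℝ)
    (hM : IsStableMatrix M) (hSg : Sg.PosDef) :
    ∃ K : Matrix U U ℝ,
      IsStableMatrix
        (((M.toBlocks₁₁)ᵀ - (M.toBlocks₂₁)ᵀ * (Sg.toBlocks₂₂)⁻¹ * Sg.toBlocks₂₁)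
          + ((M.toBlocks₂₁)ᵀ * (Sg.toBlocks₂₂)⁻¹ * M.toBlocks₂₁) * K) := by
  classical
  obtain ⟨Q0, hQ0, hPsi⟩ := Stmt17.exists_real_lyap M hM
  obtain ⟨c, hc, hsub⟩ := Stmt17.exists_smul_sub_posSemidef (-(M * Q0 + Q0 * Mᵀ)) Sg hPsi hSg.1
  set Q : Matrix (U ⊕ W) (U ⊕ W) ℝ := c • Q0 with hQdef
  have hQ : Q.PosDef := Stmt17.posdef_smul hQ0 hc
  set Λ : Matrix (U ⊕ W) (U ⊕ W) ℝ := (-(M * Q + Q * Mᵀ)) - Sg with hΛdef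
  have hΛ : Λ.PosSemidef := by
    have hΛeq : Λ = c • (-(M * Q0 + Q0 * Mᵀ)) - Sg := by
      rw [hΛdef, hQdef]
      simp only [Matrix.mul_smul, Matrix.smul_mul, smul_neg, smul_add]
    rw [hΛeq]
    exact hsub
  have hLyap : M * Q + Q * Mᵀ = -(Sg + Λ) := by rw [hΛdef]; abel
  have hsymQ : Qᵀ = Q := by
    rw [← Matrix.conjTranspose_eq_transpose_of_trivial]; exact hQ.1
  have hsymS : Sgᵀ = Sg := by
    rw [← Matrix.conjTranspose_eq_transpose_of_trivial]; exact hSg.1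
  have hS22 : (Sg.toBlocks₂₂).PosDef := Stmt17.posDef_toBlocks₂₂ hSg
  have hQ22 : (Q.toBlocks₂₂).PosDef := Stmt17.posDef_toBlocks₂₂ hQ
  have hdetS : IsUnit (Sg.toBlocks₂₂).det := isUnit_iff_ne_zero.mpr (ne_of_gt hS22.det_pos)
  have hdetQ : IsUnit (Q.toBlocks₂₂).det := isUnit_iff_ne_zero.mpr (ne_of_gt hQ22.det_pos)
  have hS22t : (Sg.toBlocks₂₂)ᵀ = Sg.toBlocks₂₂ := by
    rw [← Stmt17.toBlocks₂₂_transposeX, hsymS]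
  have hS12t : (Sg.toBlocks₁₂)ᵀ = Sg.toBlocks₂₁ := by
    rw [← Stmt17.toBlocks₂₁_transposeX, hsymS]
  have hS21t : (Sg.toBlocks₂₁)ᵀ = Sg.toBlocks₁₂ := by
    rw [← Stmt17.toBlocks₁₂_transposeX, hsymS]
  have hQ11t : (Q.toBlocks₁₁)ᵀ = Q.toBlocks₁₁ := by
    rw [← Stmt17.toBlocks₁₁_transposeX, hsymQ]
  have hQ12t : (Q.toBlocks₁₂)ᵀ = Q.toBlocks₂₁ := by
    rw [← Stmt17.toBlocks₂₁_transposeX, hsymQ]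
  have hQ21t : (Q.toBlocks₂₁)ᵀ = Q.toBlocks₁₂ := by
    rw [← Stmt17.toBlocks₁₂_transposeX, hsymQ]
  have hQ22t : (Q.toBlocks₂₂)ᵀ = Q.toBlocks₂₂ := by
    rw [← Stmt17.toBlocks₂₂_transposeX, hsymQ]
  have hPS : (Sg.toBlocks₂₂)⁻¹ * Sg.toBlocks₂₂ = 1 := Matrix.nonsing_inv_mul _ hdetS
  have hSP : Sg.toBlocks₂₂ * (Sg.toBlocks₂₂)⁻¹ = 1 := Matrix.mul_nonsing_inv _ hdetS
  have hPt : ((Sg.toBlocks₂₂)⁻¹)ᵀ = (Sg.toBlocks₂₂)⁻¹ := by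
    rw [Matrix.transpose_nonsing_inv, hS22t]
  have hQi1 : (Q.toBlocks₂₂)⁻¹ * Q.toBlocks₂₂ = 1 := Matrix.nonsing_inv_mul _ hdetQ
  have hQi2 : Q.toBlocks₂₂ * (Q.toBlocks₂₂)⁻¹ = 1 := Matrix.mul_nonsing_inv _ hdetQ
  have hQit : ((Q.toBlocks₂₂)⁻¹)ᵀ = (Q.toBlocks₂₂)⁻¹ := by
    rw [Matrix.transpose_nonsing_inv, hQ22t]
  have e11 : M.toBlocks₁₁ * Q.toBlocks₁₁ + M.toBlocks₁₂ * Q.toBlocks₂₁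
      + Q.toBlocks₁₁ * (M.toBlocks₁₁)ᵀ + Q.toBlocks₁₂ * (M.toBlocks₁₂)ᵀ
      = -(Sg.toBlocks₁₁ + Λ.toBlocks₁₁) := by
    have h := congrArg Matrix.toBlocks₁₁ hLyap
    simp only [Stmt17.toBlocks₁₁_add, Stmt17.toBlocks₁₁_mul, Stmt17.toBlocks₁₁_neg,
      Stmt17.toBlocks₁₁_transposeX, Stmt17.toBlocks₂₁_transposeX] at h
    abel_nf at h ⊢
    exact h
  have e12 : M.toBlocks₁₁ * Q.toBlocks₁₂ + M.toBlocks₁₂ * Q.toBlocks₂₂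
      + Q.toBlocks₁₁ * (M.toBlocks₂₁)ᵀ + Q.toBlocks₁₂ * (M.toBlocks₂₂)ᵀ
      = -(Sg.toBlocks₁₂ + Λ.toBlocks₁₂) := by
    have h := congrArg Matrix.toBlocks₁₂ hLyap
    simp only [Stmt17.toBlocks₁₂_add, Stmt17.toBlocks₁₂_mul, Stmt17.toBlocks₁₂_neg,
      Stmt17.toBlocks₁₂_transposeX, Stmt17.toBlocks₂₂_transposeX] at h
    abel_nf at h ⊢
    exact h
  have e21 : M.toBlocks₂₁ * Q.toBlocks₁₁ + M.toBlocks₂₂ * Q.toBlocks₂₁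
      + Q.toBlocks₂₁ * (M.toBlocks₁₁)ᵀ + Q.toBlocks₂₂ * (M.toBlocks₁₂)ᵀ
      = -(Sg.toBlocks₂₁ + Λ.toBlocks₂₁) := by
    have h := congrArg Matrix.toBlocks₂₁ hLyap
    simp only [Stmt17.toBlocks₂₁_add, Stmt17.toBlocks₂₁_mul, Stmt17.toBlocks₂₁_neg,
      Stmt17.toBlocks₁₁_transposeX, Stmt17.toBlocks₂₁_transposeX] at h
    abel_nf at h ⊢
    exact h
  have e22 : M.toBlocks₂₁ * Q.toBlocks₁₂ + M.toBlocks₂₂ * Q.toBlocks₂₂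
      + Q.toBlocks₂₁ * (M.toBlocks₂₁)ᵀ + Q.toBlocks₂₂ * (M.toBlocks₂₂)ᵀ
      = -(Sg.toBlocks₂₂ + Λ.toBlocks₂₂) := by
    have h := congrArg Matrix.toBlocks₂₂ hLyap
    simp only [Stmt17.toBlocks₂₂_add, Stmt17.toBlocks₂₂_mul, Stmt17.toBlocks₂₂_neg,
      Stmt17.toBlocks₁₂_transposeX, Stmt17.toBlocks₂₂_transposeX] at h
    abel_nf at h ⊢
    exact h
  have hT := Stmt17.key_identity
    (M.toBlocks₁₁) (M.toBlocks₁₂) (M.toBlocks₂₁) (M.toBlocks₂₂)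
    (Q.toBlocks₁₁) (Sg.toBlocks₁₁) (Λ.toBlocks₁₁)
    (Q.toBlocks₁₂) (Sg.toBlocks₁₂) (Λ.toBlocks₁₂)
    (Q.toBlocks₂₁) (Sg.toBlocks₂₁) (Λ.toBlocks₂₁)
    (Q.toBlocks₂₂) (Sg.toBlocks₂₂) (Λ.toBlocks₂₂)
    ((Sg.toBlocks₂₂)⁻¹) ((Q.toBlocks₂₂)⁻¹)
    _ _ _ _ _ _ _
    rfl rfl rfl rfl rfl rfl rfl
    hPS hSP hPt hS22t hS12t hS21t hQi1 hQi2 hQit hQ11t hQ12t hQ21t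
    e11 e12 e21 e22
  have hScPD : (Q.toBlocks₁₁ - Q.toBlocks₁₂ * (Q.toBlocks₂₂)⁻¹ * Q.toBlocks₂₁).PosDef :=
    Stmt17.posDef_schur hQ
  refine ⟨-((2⁻¹ : ℝ) • (Q.toBlocks₁₁ - Q.toBlocks₁₂ * (Q.toBlocks₂₂)⁻¹ * Q.toBlocks₂₁)), ?_⟩
  apply Stmt17.isStable_of_lyap _ _ hScPD
  rw [hT]
  have h1 := Stmt17.posSemidef_tilde hΛ (Q.toBlocks₁₂ * (Q.toBlocks₂₂)⁻¹)
  have h2 := Stmt17.posDef_schur hSg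
  have h3 := Stmt17.psd_congr (hS22.inv.posSemidef)
    (M.toBlocks₂₁ * (Q.toBlocks₁₁ - Q.toBlocks₁₂ * (Q.toBlocks₂₂)⁻¹ * Q.toBlocks₂₁)
      - Sg.toBlocks₂₂ * (Q.toBlocks₁₂ * (Q.toBlocks₂₂)⁻¹
        - Sg.toBlocks₁₂ * (Sg.toBlocks₂₂)⁻¹)ᵀ)
  exact (Matrix.PosDef.posSemidef_add h1 h2).add_posSemidef h3
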